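/- Let p, q, m be integers with p ≥ q ≥ 2 and p + 1 < m < 2p − 1. Then the set 𝒮 has maximum (p−1)/(q−1) and minimum (pq + q − 2p)/(q(q−1)); that is, both values lie in 𝒮, every element x of 𝒮 satisfies (pq + q − 2p)/(q(q−1)) ≤ x ≤ (p−1)/(q−1). -/

import Mathlib

/-- The set `𝒜` of integer sequences `(a_k)_{k≥1}` (indexed here by `k : ℕ`, so `a k`
stands for `a_{k+1}`) with `|a_k| ≤ m - 1` and `∑_{k≥1} a_k p^{-k} = 1`. -/
def seqA (p m : ℤ) : Set (ℕ → ℤ) :=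
  {a | (∀ k, |a k| ≤ m - 1) ∧ HasSum (fun k => (a k : ℝ) * ((p : ℝ)⁻¹) ^ (k + 1)) 1}

/-- The set `ℬ` of integer sequences `(b_k)_{k≥1}` with `|b_k| ≤ m - 1` and
`∑_{k≥1} b_k p^{-k} = 0`. -/
def seqB (p m : ℤ) : Set (ℕ → ℤ) :=
  {b | (∀ k, |b k| ≤ m - 1) ∧ HasSum (fun k => (b k : ℝ) * ((p : ℝ)⁻¹) ^ (k + 1)) 0}

/-- `𝒮 = { ∑_{k≥1} a_k q^{-k} : (a_k) ∈ 𝒜 }`. -/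
def setS (p q m : ℤ) : Set ℝ :=
  {x | ∃ a ∈ seqA p m, HasSum (fun k => (a k : ℝ) * ((q : ℝ)⁻¹) ^ (k + 1)) x}

/-- `𝒮' = { ∑_{k≥1} k a_k p^{-k} : (a_k) ∈ 𝒜 }`. -/
def setS' (p m : ℤ) : Set ℝ :=
  {x | ∃ a ∈ seqA p m,
    HasSum (fun k => ((k + 1 : ℕ) : ℝ) * (a k : ℝ) * ((p : ℝ)⁻¹) ^ (k + 1)) x}

/-- `𝒬 = { ∑_{k≥1} b_k q^{-k} : (b_k) ∈ ℬ }`. -/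
def setQ (p q m : ℤ) : Set ℝ :=
  {x | ∃ b ∈ seqB p m, HasSum (fun k => (b k : ℝ) * ((q : ℝ)⁻¹) ^ (k + 1)) x}

/-- `𝒬' = { ∑_{k≥1} k b_k p^{-k} : (b_k) ∈ ℬ }`. -/
def setQ' (p m : ℤ) : Set ℝ :=
  {x | ∃ b ∈ seqB p m,
    HasSum (fun k => ((k + 1 : ℕ) : ℝ) * (b k : ℝ) * ((p : ℝ)⁻¹) ^ (k + 1)) x}

private lemma geom_shift {r : ℝ} (c : ℝ) (h0 : 0 ≤ r) (h1 : r < 1) :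
    HasSum (fun k : ℕ => c * r ^ (k + 1)) (c * r / (1 - r)) := by
  have h := (hasSum_geometric_of_lt_one h0 h1).mul_left (c * r)
  have he : (fun k : ℕ => c * r * r ^ k) = fun k : ℕ => c * r ^ (k + 1) := by
    funext k; ring
  rw [he] at h
  rwa [div_eq_mul_inv]

private lemma two_val_sum {r : ℝ} (A B : ℝ) (h0 : 0 ≤ r) (h1 : r < 1) :
    HasSum (fun k : ℕ => (if k = 0 then A else B) * r ^ (k + 1))
      (B * r / (1 - r) + (A - B) * r) := by
  have hg := geom_shift B h0 h1
  have hi : HasSum (fun k : ℕ => if k = 0 then (A - B) * r else 0) ((A - B) * r) :=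
    hasSum_ite_eq 0 _
  have h2 := hg.add hi
  have he : (fun k : ℕ => (if k = 0 then A else B) * r ^ (k + 1))
      = fun k : ℕ => B * r ^ (k + 1) + (if k = 0 then (A - B) * r else 0) := by
    funext k
    rcases k with _ | k <;> simp <;> ring
  rw [he]
  exact h2

private def carry (p : ℤ) (a : ℕ → ℤ) : ℕ → ℤ
  | 0 => 1
  | n + 1 => p * carry p a n - a n

theorem stmt_3 (p q m : ℤ) (hq : 2 ≤ q) (hpq : q ≤ p)
    (hm1 : p + 1 < m) (hm2 : m < 2 * p - 1) :
    ((p : ℝ) - 1) / ((q : ℝ) - 1) ∈ setS p q m ∧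
    ((p : ℝ) * q + q - 2 * p) / ((q : ℝ) * ((q : ℝ) - 1)) ∈ setS p q m ∧
    ∀ x ∈ setS p q m,
      ((p : ℝ) * q + q - 2 * p) / ((q : ℝ) * ((q : ℝ) - 1)) ≤ x ∧
      x ≤ ((p : ℝ) - 1) / ((q : ℝ) - 1) := by
  have hqr : (2 : ℝ) ≤ (q : ℝ) := by exact_mod_cast hq
  have hpr : (2 : ℝ) ≤ (p : ℝ) := by
    have : (2 : ℤ) ≤ p := le_trans hq hpq
    exact_mod_cast this
  have hpqr : (q : ℝ) ≤ (p : ℝ) := by exact_mod_cast hpq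
  have hp0 : (0 : ℝ) < (p : ℝ) := by linarith
  have hq0 : (0 : ℝ) < (q : ℝ) := by linarith
  have hpne : (p : ℝ) ≠ 0 := ne_of_gt hp0
  have hqne : (q : ℝ) ≠ 0 := ne_of_gt hq0
  have hq1ne : (q : ℝ) - 1 ≠ 0 := by intro h; nlinarith
  have hp1ne : (p : ℝ) - 1 ≠ 0 := by intro h; nlinarith
  have hpi0 : (0 : ℝ) ≤ (p : ℝ)⁻¹ := inv_nonneg.mpr (le_of_lt hp0)
  have hpi1 : (p : ℝ)⁻¹ < 1 := by
    rw [inv_lt_one_iff₀]; right; linarith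
  have hqi0 : (0 : ℝ) ≤ (q : ℝ)⁻¹ := inv_nonneg.mpr (le_of_lt hq0)
  have hqi1 : (q : ℝ)⁻¹ < 1 := by
    rw [inv_lt_one_iff₀]; right; linarith
  have hpine : 1 - (p : ℝ)⁻¹ ≠ 0 := by
    intro h
    have : (p : ℝ)⁻¹ = 1 := by linarith
    rw [this] at hpi1; linarith
  have hqine : 1 - (q : ℝ)⁻¹ ≠ 0 := by
    intro h
    have : (q : ℝ)⁻¹ = 1 := by linarith
    rw [this] at hqi1; linarith
  refine ⟨?_, ?_, ?_⟩
  · -- maximum attained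
    refine ⟨fun _ => p - 1, ⟨?_, ?_⟩, ?_⟩
    · intro k; show |p - 1| ≤ m - 1; rw [abs_le]; omega
    · have h := geom_shift ((p : ℝ) - 1) hpi0 hpi1
      have hv : ((p : ℝ) - 1) * (p : ℝ)⁻¹ / (1 - (p : ℝ)⁻¹) = 1 := by
        field_simp
      rw [hv] at h
      have he : (fun k : ℕ => ((p - 1 : ℤ) : ℝ) * (p : ℝ)⁻¹ ^ (k + 1))
          = fun k : ℕ => ((p : ℝ) - 1) * (p : ℝ)⁻¹ ^ (k + 1) := by
        funext k; push_cast; ring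
      rw [he]; exact h
    · have h := geom_shift ((p : ℝ) - 1) hqi0 hqi1
      have hv : ((p : ℝ) - 1) * (q : ℝ)⁻¹ / (1 - (q : ℝ)⁻¹) = ((p : ℝ) - 1) / ((q : ℝ) - 1) := by
        rw [div_eq_div_iff hqine hq1ne]
        field_simp
      rw [hv] at h
      have he : (fun k : ℕ => ((p - 1 : ℤ) : ℝ) * (q : ℝ)⁻¹ ^ (k + 1))
          = fun k : ℕ => ((p : ℝ) - 1) * (q : ℝ)⁻¹ ^ (k + 1) := by
        funext k; push_cast; ring
      rw [he]; exact h
  · -- minimum attained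
    refine ⟨fun k => if k = 0 then p + 1 else -(p - 1), ⟨?_, ?_⟩, ?_⟩
    · intro k; show |if k = 0 then p + 1 else -(p - 1)| ≤ m - 1
      rw [abs_le]; split_ifs <;> omega
    · have h := two_val_sum ((p : ℝ) + 1) (-((p : ℝ) - 1)) hpi0 hpi1
      have hv : -((p : ℝ) - 1) * (p : ℝ)⁻¹ / (1 - (p : ℝ)⁻¹)
          + (((p : ℝ) + 1) - -((p : ℝ) - 1)) * (p : ℝ)⁻¹ = 1 := by
        field_simp
        ring
      rw [hv] at h
      have he : (fun k : ℕ => (((if k = 0 then p + 1 else -(p - 1)) : ℤ) : ℝ) * (p : ℝ)⁻¹ ^ (k + 1))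
          = fun k : ℕ => (if k = 0 then (p : ℝ) + 1 else -((p : ℝ) - 1)) * (p : ℝ)⁻¹ ^ (k + 1) := by
        funext k
        rcases k with _ | k <;> simp <;> push_cast <;> ring
      rw [he]; exact h
    · have h := two_val_sum ((p : ℝ) + 1) (-((p : ℝ) - 1)) hqi0 hqi1
      have hv : -((p : ℝ) - 1) * (q : ℝ)⁻¹ / (1 - (q : ℝ)⁻¹)
          + (((p : ℝ) + 1) - -((p : ℝ) - 1)) * (q : ℝ)⁻¹
          = ((p : ℝ) * q + q - 2 * p) / ((q : ℝ) * ((q : ℝ) - 1)) := by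
        rw [div_add' _ _ _ hqine, div_eq_div_iff hqine (by positivity)]
        field_simp
        ring
      rw [hv] at h
      have he : (fun k : ℕ => (((if k = 0 then p + 1 else -(p - 1)) : ℤ) : ℝ) * (q : ℝ)⁻¹ ^ (k + 1))
          = fun k : ℕ => (if k = 0 then (p : ℝ) + 1 else -((p : ℝ) - 1)) * (q : ℝ)⁻¹ ^ (k + 1) := by
        funext k
        rcases k with _ | k <;> simp <;> push_cast <;> ring
      rw [he]; exact h
  · -- bounds
    rintro x ⟨a, ⟨hab, hap⟩, hax⟩
    -- the carry sequence s
    set s : ℕ → ℤ := carry p a with hsdef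
    have hs0 : s 0 = 1 := rfl
    have hsrec : ∀ n, s (n + 1) = p * s n - a n := fun _ => rfl
    have hpart : ∀ n, 1 - ∑ i ∈ Finset.range n, (a i : ℝ) * (p : ℝ)⁻¹ ^ (i + 1)
        = (s n : ℝ) * (p : ℝ)⁻¹ ^ n := by
      intro n
      induction n with
      | zero => simp [hs0]
      | succ n ih =>
        have hrec : ((s (n + 1) : ℤ) : ℝ) = (p : ℝ) * (s n : ℝ) - (a n : ℝ) := by
          rw [hsrec n]; push_cast; ring
        have hinv : (p : ℝ)⁻¹ * (p : ℝ) = 1 := inv_mul_cancel₀ hpne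
        rw [Finset.sum_range_succ, hrec]
        linear_combination ih - (s n : ℝ) * (p : ℝ)⁻¹ ^ n * hinv
    have htail : ∀ n, HasSum (fun k => (a (k + n) : ℝ) * (p : ℝ)⁻¹ ^ (k + n + 1))
        ((s n : ℝ) * (p : ℝ)⁻¹ ^ n) := by
      intro n
      have hsum : (s n : ℝ) * (p : ℝ)⁻¹ ^ n
          + ∑ i ∈ Finset.range n, (a i : ℝ) * (p : ℝ)⁻¹ ^ (i + 1) = 1 := by
        have := hpart n; linarith
      exact (hasSum_nat_add_iff (f := fun k => (a k : ℝ) * (p : ℝ)⁻¹ ^ (k + 1)) n).mpr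
        (by rw [hsum]; exact hap)
    have hgeom : ∀ n : ℕ, HasSum (fun k : ℕ => ((m : ℝ) - 1) * (p : ℝ)⁻¹ ^ (k + n + 1))
        ((((m : ℝ) - 1) * ((p : ℝ)⁻¹ / (1 - (p : ℝ)⁻¹))) * (p : ℝ)⁻¹ ^ n) := by
      intro n
      have h := geom_shift (((m : ℝ) - 1) * (p : ℝ)⁻¹ ^ n) hpi0 hpi1
      have he : (fun k : ℕ => (((m : ℝ) - 1) * (p : ℝ)⁻¹ ^ n) * (p : ℝ)⁻¹ ^ (k + 1))
          = fun k : ℕ => ((m : ℝ) - 1) * (p : ℝ)⁻¹ ^ (k + n + 1) := by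
        funext k; ring
      rw [he] at h
      convert h using 1
      ring
    have habr : ∀ k, ((a k : ℝ)) ≤ (m : ℝ) - 1 ∧ -((m : ℝ) - 1) ≤ (a k : ℝ) := by
      intro k
      have h := abs_le.mp (hab k)
      constructor
      · exact_mod_cast h.2
      · have : -(m - 1) ≤ a k := h.1
        exact_mod_cast this
    have hsb : ∀ n, |s n| ≤ 1 := by
      intro n
      have hU := hasSum_le (fun k => mul_le_mul_of_nonneg_right (habr (k + n)).1
        (pow_nonneg hpi0 (k + n + 1))) (htail n) (hgeom n)
      have hgneg := (hgeom n).neg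
      have he2 : (fun k : ℕ => -(((m : ℝ) - 1) * (p : ℝ)⁻¹ ^ (k + n + 1)))
          = fun k : ℕ => (-((m : ℝ) - 1)) * (p : ℝ)⁻¹ ^ (k + n + 1) := by funext k; ring
      rw [he2] at hgneg
      have hL := hasSum_le (fun k => mul_le_mul_of_nonneg_right (habr (k + n)).2
        (pow_nonneg hpi0 (k + n + 1))) hgneg (htail n)
      have hipow : (0 : ℝ) < (p : ℝ)⁻¹ ^ n := pow_pos (by positivity) n
      have hs_le : (s n : ℝ) ≤ ((m : ℝ) - 1) * ((p : ℝ)⁻¹ / (1 - (p : ℝ)⁻¹)) :=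
        le_of_mul_le_mul_right hU hipow
      have hs_ge : -(((m : ℝ) - 1) * ((p : ℝ)⁻¹ / (1 - (p : ℝ)⁻¹))) ≤ (s n : ℝ) := by
        have h' : (-(((m : ℝ) - 1) * ((p : ℝ)⁻¹ / (1 - (p : ℝ)⁻¹)))) * (p : ℝ)⁻¹ ^ n
            ≤ (s n : ℝ) * (p : ℝ)⁻¹ ^ n := by
          rw [neg_mul]; exact hL
        exact le_of_mul_le_mul_right h' hipow
      have hC2 : ((m : ℝ) - 1) * ((p : ℝ)⁻¹ / (1 - (p : ℝ)⁻¹)) < 2 := by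
        have hfrac : (p : ℝ)⁻¹ / (1 - (p : ℝ)⁻¹) = 1 / ((p : ℝ) - 1) := by
          rw [div_eq_div_iff hpine hp1ne]
          field_simp
        rw [hfrac, mul_one_div, div_lt_iff₀ (by nlinarith : (0 : ℝ) < (p : ℝ) - 1)]
        have : (m : ℝ) < 2 * (p : ℝ) - 1 := by exact_mod_cast hm2
        linarith
      have h1 : (s n : ℝ) < 2 := lt_of_le_of_lt hs_le hC2
      have h2 : (-2 : ℝ) < (s n : ℝ) := by linarith
      have h1' : s n < 2 := by exact_mod_cast h1
      have h2' : (-2 : ℤ) < s n := by exact_mod_cast h2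
      rw [abs_le]; omega
    have hsbr : ∀ n, |(s n : ℝ)| ≤ 1 := fun n => by exact_mod_cast hsb n
    have hsummT : Summable (fun k : ℕ => (s (k + 1) : ℝ) * (q : ℝ)⁻¹ ^ (k + 1)) := by
      apply Summable.of_norm_bounded (geom_shift 1 hqi0 hqi1).summable
      intro k
      have hn : ‖(s (k + 1) : ℝ) * (q : ℝ)⁻¹ ^ (k + 1)‖
          = |(s (k + 1) : ℝ)| * (q : ℝ)⁻¹ ^ (k + 1) := by
        rw [Real.norm_eq_abs, abs_mul, abs_pow, abs_of_nonneg hqi0]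
      rw [hn]
      exact mul_le_mul_of_nonneg_right (hsbr (k + 1)) (pow_nonneg hqi0 _)
    obtain ⟨T, hT⟩ := hsummT
    -- bounds on T
    have hgeomq := geom_shift 1 hqi0 hqi1
    have hfracq : (q : ℝ)⁻¹ / (1 - (q : ℝ)⁻¹) = 1 / ((q : ℝ) - 1) := by
      rw [div_eq_div_iff hqine hq1ne]
      field_simp
    have hTub : T ≤ 1 * (q : ℝ)⁻¹ / (1 - (q : ℝ)⁻¹) :=
      hasSum_le (fun k => mul_le_mul_of_nonneg_right ((abs_le.mp (hsbr (k + 1))).2)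
        (pow_nonneg hqi0 (k + 1))) hT hgeomq
    have hTlb : -(1 * (q : ℝ)⁻¹ / (1 - (q : ℝ)⁻¹)) ≤ T := by
      refine hasSum_le (fun k => ?_) hgeomq.neg hT
      have h := mul_le_mul_of_nonneg_right ((abs_le.mp (hsbr (k + 1))).1)
        (pow_nonneg hqi0 (k + 1))
      have : (-1 : ℝ) * (q : ℝ)⁻¹ ^ (k + 1) ≤ (s (k + 1) : ℝ) * (q : ℝ)⁻¹ ^ (k + 1) := h
      linarith
    have hTu : T ≤ 1 / ((q : ℝ) - 1) := by
      rw [one_mul, hfracq] at hTub; exact hTub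
    have hTl : -(1 / ((q : ℝ) - 1)) ≤ T := by
      rw [one_mul, hfracq] at hTlb; exact hTlb
    -- the value of x in terms of T
    have hqj : (q : ℝ) * (q : ℝ)⁻¹ = 1 := mul_inv_cancel₀ hqne
    have hU : HasSum (fun k : ℕ => (s k : ℝ) * (q : ℝ)⁻¹ ^ (k + 1))
        ((q : ℝ)⁻¹ * T + (q : ℝ)⁻¹) := by
      have h1 := hT.mul_left ((q : ℝ)⁻¹)
      have he : (fun k : ℕ => (q : ℝ)⁻¹ * ((s (k + 1) : ℝ) * (q : ℝ)⁻¹ ^ (k + 1)))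
          = fun k : ℕ => (s (k + 1) : ℝ) * (q : ℝ)⁻¹ ^ (k + 1 + 1) := by
        funext k; ring
      rw [he] at h1
      have h2 := (hasSum_nat_add_iff
        (f := fun k : ℕ => (s k : ℝ) * (q : ℝ)⁻¹ ^ (k + 1)) 1).mp h1
      simpa [hs0, Finset.sum_range_one] using h2
    have hxeq : x = (p : ℝ) * ((q : ℝ)⁻¹ * T + (q : ℝ)⁻¹) - T := by
      have h3 := (hU.mul_left (p : ℝ)).sub hT
      have he : (fun k : ℕ => (p : ℝ) * ((s k : ℝ) * (q : ℝ)⁻¹ ^ (k + 1))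
          - (s (k + 1) : ℝ) * (q : ℝ)⁻¹ ^ (k + 1))
          = fun k : ℕ => (a k : ℝ) * (q : ℝ)⁻¹ ^ (k + 1) := by
        funext k
        have hak : (a k : ℝ) = (p : ℝ) * (s k : ℝ) - (s (k + 1) : ℝ) := by
          rw [hsrec k]; push_cast; ring
        rw [hak]; ring
      rw [he] at h3
      exact hax.unique h3
    have hcoef : (0 : ℝ) ≤ (p : ℝ) * (q : ℝ)⁻¹ - 1 := by
      have h := mul_le_mul_of_nonneg_right hpqr hqi0
      rw [hqj] at h; linarith
    have hu : ((q : ℝ) - 1) * (1 / ((q : ℝ) - 1)) = 1 := by field_simp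
    constructor
    · -- lower bound
      rw [hxeq]
      have hqq1 : (0 : ℝ) < (q : ℝ) * ((q : ℝ) - 1) := by nlinarith
      rw [div_le_iff₀ hqq1]
      have key : ((p : ℝ) * ((q : ℝ)⁻¹ * T + (q : ℝ)⁻¹) - T) * ((q : ℝ) * ((q : ℝ) - 1))
          - ((p : ℝ) * q + q - 2 * p)
          = ((p : ℝ) * (q : ℝ)⁻¹ - 1) * (T + 1 / ((q : ℝ) - 1)) * ((q : ℝ) * ((q : ℝ) - 1)) := by
        linear_combination ((p : ℝ) * ((q : ℝ) - 1)
          - (p : ℝ) * (1 / ((q : ℝ) - 1)) * ((q : ℝ) - 1)) * hqj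
          + ((q : ℝ) - (p : ℝ)) * hu
      have hprod : (0 : ℝ) ≤ ((p : ℝ) * (q : ℝ)⁻¹ - 1) * (T + 1 / ((q : ℝ) - 1))
          * ((q : ℝ) * ((q : ℝ) - 1)) :=
        mul_nonneg (mul_nonneg hcoef (by linarith)) (le_of_lt hqq1)
      linarith
    · -- upper bound
      rw [hxeq]
      have hq1pos : (0 : ℝ) < (q : ℝ) - 1 := by linarith
      rw [le_div_iff₀ hq1pos]
      have key : ((p : ℝ) - 1) - ((p : ℝ) * ((q : ℝ)⁻¹ * T + (q : ℝ)⁻¹) - T) * ((q : ℝ) - 1)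
          = ((p : ℝ) * (q : ℝ)⁻¹ - 1) * (1 / ((q : ℝ) - 1) - T) * ((q : ℝ) - 1) := by
        linear_combination (-(p : ℝ)) * hqj + (-((p : ℝ) * (q : ℝ)⁻¹ - 1)) * hu
      have hprod : (0 : ℝ) ≤ ((p : ℝ) * (q : ℝ)⁻¹ - 1) * (1 / ((q : ℝ) - 1) - T)
          * ((q : ℝ) - 1) :=
        mul_nonneg (mul_nonneg hcoef (by linarith)) (le_of_lt hq1pos)
      linarith
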